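/- Let μ be a probability mass function on a type γ, let S : γ → Finset α assign to each m a nonempty finite set, let f : α → β, and let S' be a nonempty finite subset of β. If for every m in the support of μ the function f evenly partitions S(m) into S', then the distribution obtained by first sampling m according to μ, then sampling x uniformly from S(m), and returning f(x), equals the uniform distribution on S'. (This justifies the paper's RSample rule for dynamic random choice, where the sampling set is itself random.) -/
import Mathlib
open scoped ENNReal

lemma uniform_map_eq {α β : Type*} [DecidableEq β]
    (s : Finset α) (hs : s.Nonempty) (f : α → β) (S' : Finset β) (hS' : S'.Nonempty)
    (himg : s.image f = S')
    (k : ℕ) (hk : ∀ s' ∈ S', (s.filter (fun a => f a = s')).card = k) :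
    (PMF.uniformOfFinset s hs).map f = PMF.uniformOfFinset S' hS' := by
  classical
  have hcard : s.card = S'.card * k := by
    rw [Finset.card_eq_sum_card_fiberwise (f := f) (t := S')
      (fun a ha => himg ▸ Finset.mem_image_of_mem f ha)]
    rw [Finset.sum_congr rfl hk, Finset.sum_const, smul_eq_mul]
  ext b
  have hsum : ((PMF.uniformOfFinset s hs).map f) b
      = (s.filter (fun a => f a = b)).card * (s.card : ℝ≥0∞)⁻¹ := by
    rw [PMF.map_apply]
    rw [tsum_eq_sum (s := s.filter fun a => f a = b) (fun a ha => by
        simp only [Finset.mem_filter, not_and] at ha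
        by_cases h1 : b = f a
        · by_cases h2 : a ∈ s
          · exact absurd h1.symm (ha h2)
          · simp [h1, PMF.uniformOfFinset_apply, h2]
        · simp [h1])]
    rw [Finset.sum_congr (g := fun _ => ((s.card : ℝ≥0∞))⁻¹) rfl (fun a ha => by
      simp only [Finset.mem_filter] at ha
      simp [PMF.uniformOfFinset_apply, ha.1, ha.2])]
    simp [Finset.sum_const]
  by_cases hb : b ∈ S'
  · have hk0 : k ≠ 0 := by
      rcases Finset.mem_image.mp (himg ▸ hb) with ⟨a, ha, rfl⟩
      intro h
      have := hk _ hb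
      rw [h, Finset.card_eq_zero] at this
      exact absurd this (Finset.ne_empty_of_mem (Finset.mem_filter.mpr ⟨ha, rfl⟩))
    rw [hsum, hk _ hb, hcard, PMF.uniformOfFinset_apply, if_pos hb]
    rw [Nat.cast_mul]
    rw [ENNReal.mul_inv (by left; simp [hS'.card_ne_zero]) (by left; simp [hk0])]
    rw [← mul_assoc, mul_comm (k : ℝ≥0∞), mul_assoc,
      ENNReal.mul_inv_cancel (by simpa using hk0) (by simp), mul_one]
  · rw [hsum, PMF.uniformOfFinset_apply, if_neg hb]
    have : s.filter (fun a => f a = b) = ∅ := by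
      rw [Finset.filter_eq_empty_iff]
      intro a ha h
      exact hb (himg ▸ h ▸ Finset.mem_image_of_mem f ha)
    simp [this]

/-- Dynamic random choice: if for every `m` in the support of `μ` the function `f`
evenly partitions `S m` into the fixed set `S'`, then sampling `m ∼ μ`, then `x`
uniformly from `S m`, and returning `f x`, yields the uniform distribution on `S'`. -/
theorem rsample_dynamic {γ α β : Type*} [DecidableEq β]
    (μ : PMF γ) (S : γ → Finset α) (hne : ∀ m, (S m).Nonempty)
    (f : α → β) (S' : Finset β) (hS' : S'.Nonempty)
    (hEI : ∀ m ∈ μ.support, (S m).image f = S' ∧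
      ∃ k : ℕ, ∀ s' ∈ S', ((S m).filter (fun s => f s = s')).card = k) :
    (μ.bind fun m => (PMF.uniformOfFinset (S m) (hne m)).map f) =
      PMF.uniformOfFinset S' hS' := by
  have key : ∀ m ∈ μ.support,
      (PMF.uniformOfFinset (S m) (hne m)).map f = PMF.uniformOfFinset S' hS' := by
    intro m hm
    obtain ⟨himg, k, hk⟩ := hEI m hm
    exact uniform_map_eq _ _ f S' hS' himg k hk
  have : (μ.bind fun m => (PMF.uniformOfFinset (S m) (hne m)).map f)
      = μ.bind (fun _ => PMF.uniformOfFinset S' hS') := by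
    ext b
    rw [PMF.bind_apply, PMF.bind_apply]
    refine tsum_congr fun m => ?_
    by_cases hm : m ∈ μ.support
    · rw [key m hm]
    · have hz : μ m = 0 := (PMF.apply_eq_zero_iff μ m).mpr hm
      simp [hz]
  rw [this, PMF.bind_const]
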